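/- (Theorem 4.5, sufficiency: irreducibility of η'₂.) Let n ≥ 3 and f, w, y, v ∈ ℂ with f ≠ 0 and v ≠ 0, and suppose that at least one of the following holds: f ≠ v, or w + f²·y·v⁻¹ ≠ 1, or v·y + w ≠ 1. Let 𝒮 = { L_i(!![0, f; f⁻¹, 0]), L_i(!![w, f²·y; y, w]), L_i(!![0, v; v⁻¹, 0]) : 1 ≤ i ≤ n−1 }. Then every submodule U of ℂⁿ that is invariant under 𝒮 (i.e. M.mulVec x ∈ U for all M ∈ 𝒮 and x ∈ U) satisfies U = ⊥ or U = ⊤. That is, the representation η'₂ of VST_n with these parameters is irreducible. -/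

import Mathlib

/-- `Lmat n i M` is the `n × n` matrix agreeing with the identity outside rows and
columns `i, i+1` (0-indexed), with `2 × 2` block `M` there. -/
def Lmat {R : Type*} [Zero R] [One R] (n : ℕ) (i : ℕ) (M : Matrix (Fin 2) (Fin 2) R) :
    Matrix (Fin n) (Fin n) R :=
  Matrix.of fun a b =>
    if a.val = i ∧ b.val = i then M 0 0
    else if a.val = i ∧ b.val = i + 1 then M 0 1
    else if a.val = i + 1 ∧ b.val = i then M 1 0
    else if a.val = i + 1 ∧ b.val = i + 1 then M 1 1
    else if a.val = b.val then 1 else 0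

lemma Lmat_mulVec {n : ℕ} (i : ℕ) (hi : i + 1 < n) (M : Matrix (Fin 2) (Fin 2) ℂ)
    (x : Fin n → ℂ) :
    (Lmat n i M).mulVec x = fun a =>
      if a.val = i then M 0 0 * x ⟨i, by omega⟩ + M 0 1 * x ⟨i+1, hi⟩
      else if a.val = i + 1 then M 1 0 * x ⟨i, by omega⟩ + M 1 1 * x ⟨i+1, hi⟩
      else x a := by
  set i0 : Fin n := ⟨i, by omega⟩
  set i1 : Fin n := ⟨i+1, hi⟩
  funext a
  simp only [Matrix.mulVec, dotProduct, Lmat, Matrix.of_apply]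
  by_cases ha0 : a.val = i
  · have : ∀ b : Fin n,
        (if a.val = i ∧ b.val = i then M 0 0
        else if a.val = i ∧ b.val = i + 1 then M 0 1
        else if a.val = i + 1 ∧ b.val = i then M 1 0
        else if a.val = i + 1 ∧ b.val = i + 1 then M 1 1
        else if a.val = b.val then 1 else 0) * x b
        = (if b = i0 then M 0 0 * x i0 else 0) + (if b = i1 then M 0 1 * x i1 else 0) := by
      intro b
      rcases eq_or_ne b i0 with rfl | hb0
      · simp [ha0, i0, i1]
      · rcases eq_or_ne b i1 with rfl | hb1
        · simp [ha0, i0, i1]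
        · have h0 : b.val ≠ i := fun h => hb0 (Fin.ext h)
          have h1 : b.val ≠ i + 1 := fun h => hb1 (Fin.ext h)
          simp [ha0, hb0, hb1, h0, h1]
          exact fun h => absurd h.symm h0
    rw [Finset.sum_congr rfl (fun b _ => this b), Finset.sum_add_distrib]
    simp [ha0]
  · by_cases ha1 : a.val = i + 1
    · have : ∀ b : Fin n,
          (if a.val = i ∧ b.val = i then M 0 0
          else if a.val = i ∧ b.val = i + 1 then M 0 1
          else if a.val = i + 1 ∧ b.val = i then M 1 0
          else if a.val = i + 1 ∧ b.val = i + 1 then M 1 1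
          else if a.val = b.val then 1 else 0) * x b
          = (if b = i0 then M 1 0 * x i0 else 0) + (if b = i1 then M 1 1 * x i1 else 0) := by
        intro b
        rcases eq_or_ne b i0 with rfl | hb0
        · simp [ha0, ha1, i0, i1]
        · rcases eq_or_ne b i1 with rfl | hb1
          · simp [ha0, ha1, i0, i1]
          · have h0 : b.val ≠ i := fun h => hb0 (Fin.ext h)
            have h1 : b.val ≠ i + 1 := fun h => hb1 (Fin.ext h)
            simp [ha0, ha1, hb0, hb1, h0, h1]
            exact fun h => absurd h.symm h1
      rw [Finset.sum_congr rfl (fun b _ => this b), Finset.sum_add_distrib]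
      simp [ha0, ha1]
    · have : ∀ b : Fin n,
          (if a.val = i ∧ b.val = i then M 0 0
          else if a.val = i ∧ b.val = i + 1 then M 0 1
          else if a.val = i + 1 ∧ b.val = i then M 1 0
          else if a.val = i + 1 ∧ b.val = i + 1 then M 1 1
          else if a.val = b.val then 1 else 0) * x b
          = if b = a then x a else 0 := by
        intro b
        rcases eq_or_ne b a with rfl | hb
        · simp [ha0, ha1]
        · have : a.val ≠ b.val := fun h => hb (Fin.ext h.symm)
          simp [ha0, ha1, this, hb]
      rw [Finset.sum_congr rfl (fun b _ => this b)]
      simp [ha0, ha1]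

lemma key_lemma {n : ℕ} (hn : 3 ≤ n) (f : ℂ) (hf : f ≠ 0) (α β : ℂ) (hα : α ≠ 0) (hβ : β ≠ 0)
    (U : Submodule ℂ (Fin n → ℂ))
    (hS : ∀ x ∈ U, ∀ (i : ℕ) (hi : i + 1 < n),
      (fun a : Fin n => if a.val = i then f * x ⟨i+1, hi⟩
        else if a.val = i+1 then f⁻¹ * x ⟨i, by omega⟩ else x a) ∈ U)
    (hE : ∀ x ∈ U, ∀ (i : ℕ) (hi : i + 1 < n),
      (fun a : Fin n => if a.val = i then α * x ⟨i, by omega⟩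
        else if a.val = i+1 then β * x ⟨i+1, hi⟩ else 0) ∈ U)
    (hne : U ≠ ⊥) : U = ⊤ := by
  -- step up/down for singles
  have step_up : ∀ (k : ℕ) (hk : k + 1 < n),
      Pi.single (⟨k, by omega⟩ : Fin n) (1:ℂ) ∈ U →
      Pi.single (⟨k+1, hk⟩ : Fin n) (1:ℂ) ∈ U := by
    intro k hk h
    have h2 := hS _ h k hk
    have h3 := U.smul_mem f h2
    convert h3 using 1
    funext a
    simp only [Pi.smul_apply, smul_eq_mul, Pi.single_apply, Fin.ext_iff]
    by_cases e1 : (a : ℕ) = k <;> by_cases e2 : (a : ℕ) = k + 1 <;>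
      simp [e1, e2] <;> first | omega | field_simp | (intro h'; omega)
  have step_dn : ∀ (k : ℕ) (hk : k + 1 < n),
      Pi.single (⟨k+1, hk⟩ : Fin n) (1:ℂ) ∈ U →
      Pi.single (⟨k, by omega⟩ : Fin n) (1:ℂ) ∈ U := by
    intro k hk h
    have h2 := hS _ h k hk
    have h3 := U.smul_mem f⁻¹ h2
    convert h3 using 1
    funext a
    simp only [Pi.smul_apply, smul_eq_mul, Pi.single_apply, Fin.ext_iff]
    by_cases e1 : (a : ℕ) = k <;> by_cases e2 : (a : ℕ) = k + 1 <;>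
      simp [e1, e2] <;> first | omega | field_simp | (intro h'; omega)
  -- get a vector with a nonzero interior coordinate
  obtain ⟨x0, hx0U, hx00⟩ := Submodule.exists_mem_ne_zero_of_ne_bot hne
  obtain ⟨j0, hj0⟩ : ∃ j, x0 j ≠ 0 := by
    by_contra h; push_neg at h; exact hx00 (funext h)
  have interior : ∃ x ∈ U, ∃ j : ℕ, 1 ≤ j ∧ j + 2 ≤ n ∧ ∀ hj : j < n, x ⟨j, hj⟩ ≠ 0 := by
    rcases (show (j0 : ℕ) = 0 ∨ (j0 : ℕ) = n - 1 ∨ (1 ≤ (j0:ℕ) ∧ (j0:ℕ) + 2 ≤ n)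
        from by omega) with h | h | h
    · refine ⟨_, hS x0 hx0U 0 (by omega), 1, le_refl 1, by omega, fun hj => ?_⟩
      have : ((⟨1, hj⟩ : Fin n) : ℕ) ≠ 0 := by simp only [Fin.val_mk]; omega
      simp only [this, if_false, if_pos rfl]
      have : (⟨0, by omega⟩ : Fin n) = j0 := Fin.ext (by simp only [Fin.val_mk]; omega)
      rw [this]
      exact mul_ne_zero (inv_ne_zero hf) hj0
    · refine ⟨_, hS x0 hx0U (n-2) (by omega), n-2, by omega, by omega, fun hj => ?_⟩
      simp only [if_pos rfl]
      have : (⟨n-2+1, by omega⟩ : Fin n) = j0 := Fin.ext (by simp only [Fin.val_mk]; omega)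
      rw [this]
      exact mul_ne_zero hf hj0
    · exact ⟨x0, hx0U, (j0 : ℕ), h.1, h.2, fun hj => by
        have : (⟨(j0:ℕ), hj⟩ : Fin n) = j0 := Fin.ext rfl
        rw [this]; exact hj0⟩
  obtain ⟨x, hxU, j, hj1, hj2, hxj⟩ := interior
  have hjlt : j < n := by omega
  -- isolate coordinate j
  have key1 : Pi.single (⟨j, hjlt⟩ : Fin n) (1:ℂ) ∈ U := by
    have hyU := hE x hxU (j-1) (by omega)
    have hzU := hE _ hyU j (by omega)
    have hc : α * (β * x ⟨j, hjlt⟩) ≠ 0 :=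
      mul_ne_zero hα (mul_ne_zero hβ (hxj hjlt))
    have h2 : (α * (β * x ⟨j, hjlt⟩)) • (Pi.single (⟨j, hjlt⟩ : Fin n) (1:ℂ) : Fin n → ℂ) ∈ U := by
      convert hzU using 1
      funext a
      simp only [Pi.smul_apply, smul_eq_mul, Pi.single_apply, Fin.ext_iff]
      have hjj : j - 1 + 1 = j := by omega
      by_cases e1 : (a : ℕ) = j <;> by_cases e2 : (a : ℕ) = j + 1 <;>
        simp [e1, e2, hjj, show ¬(j = j - 1) by omega, show ¬(j + 1 = j - 1) by omega,
          show ¬(j + 1 = j) by omega] <;> first | ring | omega | (intro h'; omega)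
    have := U.smul_mem (α * (β * x ⟨j, hjlt⟩))⁻¹ h2
    rwa [smul_smul, inv_mul_cancel₀ hc, one_smul] at this
  -- spread to all coordinates
  have upAll : ∀ m : ℕ, ∀ h : j + m < n, Pi.single (⟨j + m, h⟩ : Fin n) (1:ℂ) ∈ U := by
    intro m
    induction m with
    | zero => intro h; exact key1
    | succ m ih => intro h; exact step_up (j + m) h (ih (by omega))
  have dnAll : ∀ m : ℕ, m ≤ j → Pi.single (⟨j - m, by omega⟩ : Fin n) (1:ℂ) ∈ U := by
    intro m
    induction m with
    | zero => intro _; exact key1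
    | succ m ih =>
      intro h
      have prev := ih (by omega)
      have e : (⟨j - m, by omega⟩ : Fin n) = ⟨(j - (m+1)) + 1, by omega⟩ := Fin.ext (by simp only [Fin.val_mk]; omega)
      rw [e] at prev
      exact step_dn (j - (m+1)) (by omega) prev
  have allSingle : ∀ k : Fin n, Pi.single k (1:ℂ) ∈ U := by
    intro k
    rcases le_or_gt j (k : ℕ) with h | h
    · have e : k = ⟨j + ((k:ℕ) - j), by omega⟩ := Fin.ext (by simp only [Fin.val_mk]; omega)
      rw [e]; exact upAll _ _
    · have e : k = ⟨j - (j - (k:ℕ)), by omega⟩ := Fin.ext (by simp only [Fin.val_mk]; omega)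
      rw [e]; exact dnAll _ (by omega)
  rw [Submodule.eq_top_iff']
  intro z
  have hz : z = ∑ k : Fin n, z k • (Pi.single k (1:ℂ) : Fin n → ℂ) := by
    funext a
    simp [Pi.single_apply]
  rw [hz]
  exact Submodule.sum_mem U fun k _ => U.smul_mem _ (allSingle k)

/-- (Theorem 4.5, sufficiency.) If `f ≠ v`, or `w + f²y v⁻¹ ≠ 1`, or `vy + w ≠ 1`, then
the only submodules of `ℂⁿ` invariant under all the matrices of the representation
`η'₂` are `⊥` and `⊤`: the representation `η'₂` is irreducible. -/
theorem eta2_prime_irreducible (n : ℕ) (hn : 3 ≤ n) (f w y v : ℂ)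
    (hf : f ≠ 0) (hv : v ≠ 0)
    (hcond : f ≠ v ∨ w + f ^ 2 * y * v⁻¹ ≠ 1 ∨ v * y + w ≠ 1)
    (U : Submodule ℂ (Fin n → ℂ))
    (hU : ∀ M ∈ ({M | (∃ i : Fin (n - 1), M = Lmat n i.val !![0, f; f⁻¹, 0]) ∨
                      (∃ i : Fin (n - 1), M = Lmat n i.val !![w, f ^ 2 * y; y, w]) ∨
                      (∃ i : Fin (n - 1), M = Lmat n i.val !![0, v; v⁻¹, 0])} :
        Set (Matrix (Fin n) (Fin n) ℂ)),
      ∀ x ∈ U, M.mulVec x ∈ U) :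
    U = ⊥ ∨ U = ⊤ := by
  by_cases hbot : U = ⊥
  · exact Or.inl hbot
  right
  -- swap closure
  have hSmem : ∀ x ∈ U, ∀ (i : ℕ) (hi : i + 1 < n),
      (fun a : Fin n => if a.val = i then f * x ⟨i+1, hi⟩
        else if a.val = i+1 then f⁻¹ * x ⟨i, by omega⟩ else x a) ∈ U := by
    intro x hx i hi
    have hm := hU (Lmat n i !![0, f; f⁻¹, 0])
      (Or.inl ⟨⟨i, by omega⟩, rfl⟩) x hx
    rw [Lmat_mulVec i hi] at hm
    convert hm using 1
    funext a
    by_cases e1 : (a : ℕ) = i <;> by_cases e2 : (a : ℕ) = i + 1 <;>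
      simp [e1, e2, Matrix.cons_val_zero, Matrix.cons_val_one, Matrix.head_cons]
  have hNmem : ∀ x ∈ U, ∀ (i : ℕ) (hi : i + 1 < n),
      (fun a : Fin n => if a.val = i then v * x ⟨i+1, hi⟩
        else if a.val = i+1 then v⁻¹ * x ⟨i, by omega⟩ else x a) ∈ U := by
    intro x hx i hi
    have hm := hU (Lmat n i !![0, v; v⁻¹, 0])
      (Or.inr (Or.inr ⟨⟨i, by omega⟩, rfl⟩)) x hx
    rw [Lmat_mulVec i hi] at hm
    convert hm using 1
    funext a
    by_cases e1 : (a : ℕ) = i <;> by_cases e2 : (a : ℕ) = i + 1 <;>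
      simp [e1, e2]
  have hTmem : ∀ x ∈ U, ∀ (i : ℕ) (hi : i + 1 < n),
      (fun a : Fin n => if a.val = i then w * x ⟨i, by omega⟩ + f^2*y * x ⟨i+1, hi⟩
        else if a.val = i+1 then y * x ⟨i, by omega⟩ + w * x ⟨i+1, hi⟩ else x a) ∈ U := by
    intro x hx i hi
    have hm := hU (Lmat n i !![w, f ^ 2 * y; y, w])
      (Or.inr (Or.inl ⟨⟨i, by omega⟩, rfl⟩)) x hx
    rw [Lmat_mulVec i hi] at hm
    convert hm using 1
    rfl
  by_cases hfv : f = v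
  · -- case 2 : α = β = 1, κ = 1 - w - f*y ≠ 0
    have hκ : 1 - w - f * y ≠ 0 := by
      rcases hcond with h | h | h
      · exact absurd hfv h
      · intro hz
        apply h
        rw [← hfv]
        field_simp
        linear_combination -hz
      · intro hz
        apply h
        rw [← hfv]
        linear_combination -hz
    apply key_lemma hn f hf 1 1 one_ne_zero one_ne_zero U hSmem _ hbot
    intro x hx i hi
    have hT := hTmem x hx i hi
    have hS := hSmem x hx i hi
    have hm := U.sub_mem hx (U.smul_mem (1 - w - f*y)⁻¹
      (U.sub_mem (U.sub_mem hT (U.smul_mem w hx)) (U.smul_mem (f*y) hS)))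
    convert hm using 1
    funext a
    simp only [Pi.sub_apply, Pi.smul_apply, smul_eq_mul]
    have hne1 : ¬(i + 1 = i) := by omega
    have hne2 : ¬(i = i + 1) := by omega
    by_cases e1 : (a : ℕ) = i <;> by_cases e2 : (a : ℕ) = i + 1
    · omega
    · have ha : a = ⟨i, by omega⟩ := Fin.ext e1
      simp [ha, e1, e2, hne1, hne2] <;> field_simp <;> ring
    · have ha : a = ⟨i+1, hi⟩ := Fin.ext e2
      simp [ha, e1, e2, hne1, hne2] <;> field_simp <;> ring
    · simp [e1, e2, hne1, hne2] <;> field_simp <;> ring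
  · -- case 1 : α = v*f⁻¹ - 1, β = f*v⁻¹ - 1
    have hα : v * f⁻¹ - 1 ≠ 0 := by
      rw [sub_ne_zero]
      intro h; apply hfv
      field_simp at h
      exact h.symm
    have hβ : f * v⁻¹ - 1 ≠ 0 := by
      rw [sub_ne_zero]
      intro h; apply hfv
      field_simp at h
      exact h
    apply key_lemma hn f hf (v * f⁻¹ - 1) (f * v⁻¹ - 1) hα hβ U hSmem _ hbot
    intro x hx i hi
    have hS := hSmem x hx i hi
    have hN := hNmem _ hS i hi
    have hm := U.sub_mem hN hx
    convert hm using 1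
    funext a
    simp only [Pi.sub_apply]
    have hne1 : ¬(i + 1 = i) := by omega
    have hne2 : ¬(i = i + 1) := by omega
    by_cases e1 : (a : ℕ) = i <;> by_cases e2 : (a : ℕ) = i + 1
    · omega
    · have ha : a = ⟨i, by omega⟩ := Fin.ext e1
      simp [ha, e1, e2, hne1, hne2] <;> ring
    · have ha : a = ⟨i+1, hi⟩ := Fin.ext e2
      simp [ha, e1, e2, hne1, hne2] <;> ring
    · simp [e1, e2, hne1, hne2] <;> ring
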